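/- arXiv:0905.4048 — 2 statements merged into one kernel-verified Lean document; each statement's English description precedes it below -/
import Mathlib

section
/- Let I be a proper ideal of R (I ≠ R). Then card(R/I) = 2 if and only if for all integers i and j one has both ζ^i − ζ^j ∈ I and ζ^i + ζ^j ∈ I (i.e., all the roots of unity ±ζ^i carry the same colour in the colouring induced by I). -/
open Complex

/-- The primitive `n`-th root of unity `ζ = exp(2πi/n)`. -/
noncomputable def zeta (n : ℕ) : ℂ := Complex.exp (2 * Real.pi * Complex.I / n)

/-- The ring of cyclotomic integers `M_n = ℤ[ζ_n]`, as a subring of `ℂ`. -/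
noncomputable def Rn (n : ℕ) : Subring ℂ := Subring.closure {zeta n}

/-- `ζ_n` as an element of `M_n`. -/
noncomputable def zetaR (n : ℕ) : ↥(Rn n) := ⟨zeta n, Subring.subset_closure rfl⟩

/-- `z ∈ ℂ` lies in the ideal `I` of `Rn n` (viewed inside `ℂ`). -/
def InIdeal (n : ℕ) (I : Ideal ↥(Rn n)) (z : ℂ) : Prop :=
  ∃ w : ↥(Rn n), w ∈ I ∧ (w : ℂ) = z

/-- An isometry of the complex plane: `z ↦ a z + b` or `z ↦ a conj z + b` with `|a| = 1`. -/
def IsIsometry (g : ℂ → ℂ) : Prop :=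
  ∃ a b : ℂ, ‖a‖ = 1 ∧
    ((∀ z, g z = a * z + b) ∨ (∀ z, g z = a * (starRingEnd ℂ) z + b))

/-- An orientation-preserving isometry of the complex plane: `z ↦ a z + b` with `|a| = 1`. -/
def IsOPIsometry (g : ℂ → ℂ) : Prop :=
  ∃ a b : ℂ, ‖a‖ = 1 ∧ ∀ z, g z = a * z + b

/-- `g` is a colour symmetry of the colouring of `Rn n` induced by the ideal `I`. -/
def IsColourSym (n : ℕ) (I : Ideal ↥(Rn n)) (g : ℂ → ℂ) : Prop :=
  ∀ x y : ℂ, x ∈ Rn n → y ∈ Rn n → (InIdeal n I (x - y) ↔ InIdeal n I (g x - g y))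

/-- The colouring induced by `I` is perfect. -/
def IsPerfectColouring (n : ℕ) (I : Ideal ↥(Rn n)) : Prop :=
  ∀ g : ℂ → ℂ, IsIsometry g → g '' (Rn n : Set ℂ) = (Rn n : Set ℂ) → IsColourSym n I g

/-- The colouring induced by `I` is chirally perfect. -/
def IsChirallyPerfectColouring (n : ℕ) (I : Ideal ↥(Rn n)) : Prop :=
  ∀ g : ℂ → ℂ, IsOPIsometry g → g '' (Rn n : Set ℂ) = (Rn n : Set ℂ) → IsColourSym n I g

set_option maxHeartbeats 1000000
set_option synthInstance.maxHeartbeats 400000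

lemma zeta_ne_zero (n : ℕ) : zeta n ≠ 0 := Complex.exp_ne_zero _

lemma zeta_pow_n (n : ℕ) (hn : n ≠ 0) : zeta n ^ n = 1 := by
  rw [zeta, ← Complex.exp_nat_mul]
  rw [mul_div_cancel₀ _ (by exact_mod_cast hn : (n : ℂ) ≠ 0)]
  exact Complex.exp_two_pi_mul_I

lemma zpow_reduce (n : ℕ) (hn : n ≠ 0) (i : ℤ) : ∃ k : ℕ, zeta n ^ i = zeta n ^ k := by
  refine ⟨(i % n).toNat, ?_⟩
  have hz := zeta_ne_zero n
  have hnn : (0:ℤ) < (n:ℤ) := by exact_mod_cast Nat.pos_of_ne_zero hn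
  have h1 : zeta n ^ i = zeta n ^ ((n:ℤ) * (i / n) + i % n) := by
    rw [Int.mul_ediv_add_emod]
  rw [h1, zpow_add₀ hz, zpow_mul, zpow_natCast, zeta_pow_n n hn,
    one_zpow, one_mul, ← zpow_natCast, Int.toNat_of_nonneg (Int.emod_nonneg i hnn.ne')]

lemma coe_pow (n : ℕ) (k : ℕ) : ((zetaR n ^ k : ↥(Rn n)) : ℂ) = zeta n ^ k := by
  push_cast [zetaR]; rfl

lemma q_two (n : ℕ) (I : Ideal ↥(Rn n)) :
    Ideal.Quotient.mk I (1 + 1) = 1 + 1 := by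
  rw [RingHom.map_add, RingHom.map_one]

/-- for a proper ideal `I`, `card(R/I) = 2` iff all roots of unity
`± ζ^i` carry the same colour, i.e. `ζ^i - ζ^j ∈ I` and `ζ^i + ζ^j ∈ I` for all
integers `i, j`. -/
theorem stmt10 (n : ℕ) (hn : 3 ≤ n) (hn2 : n % 4 ≠ 2) (I : Ideal ↥(Rn n)) (hI : I ≠ ⊤) :
    Nat.card (↥(Rn n) ⧸ I) = 2 ↔
      ∀ i j : ℤ, InIdeal n I ((zeta n) ^ i - (zeta n) ^ j) ∧
        InIdeal n I ((zeta n) ^ i + (zeta n) ^ j) := by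
  have hn0 : n ≠ 0 := by omega
  have hnt : Nontrivial (↥(Rn n) ⧸ I) := Ideal.Quotient.nontrivial_iff.mpr hI
  have h01 : (0 : ↥(Rn n) ⧸ I) ≠ 1 := zero_ne_one
  have key : Ideal.Quotient.mk I (zetaR n) = 1 → Ideal.Quotient.mk I (1 + 1) = 0 →
      ∀ i j : ℤ, InIdeal n I ((zeta n) ^ i - (zeta n) ^ j) ∧
        InIdeal n I ((zeta n) ^ i + (zeta n) ^ j) := by
    intro hz h2 i j
    obtain ⟨k, hk⟩ := zpow_reduce n hn0 i
    obtain ⟨l, hl⟩ := zpow_reduce n hn0 j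
    have hqk : Ideal.Quotient.mk I (zetaR n ^ k) = 1 := by
      rw [RingHom.map_pow, hz, one_pow]
    have hql : Ideal.Quotient.mk I (zetaR n ^ l) = 1 := by
      rw [RingHom.map_pow, hz, one_pow]
    constructor
    · refine ⟨zetaR n ^ k - zetaR n ^ l, ?_, ?_⟩
      · rw [← Ideal.Quotient.eq_zero_iff_mem, RingHom.map_sub, hqk, hql, sub_self]
      · push_cast [coe_pow, hk, hl, zetaR]; ring
    · refine ⟨zetaR n ^ k + zetaR n ^ l, ?_, ?_⟩
      · rw [← Ideal.Quotient.eq_zero_iff_mem, RingHom.map_add, hqk, hql, ← q_two n I, h2]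
      · push_cast [coe_pow, hk, hl, zetaR]; ring
  constructor
  · intro hcard
    obtain ⟨x, y, hxy, huniv⟩ := Nat.card_eq_two_iff.mp hcard
    have hmem : ∀ z : ↥(Rn n) ⧸ I, z = 0 ∨ z = 1 := by
      intro z
      have h0 : (0 : ↥(Rn n) ⧸ I) ∈ ({x, y} : Set _) := huniv ▸ Set.mem_univ _
      have h1' : (1 : ↥(Rn n) ⧸ I) ∈ ({x, y} : Set _) := huniv ▸ Set.mem_univ _
      have hz : z ∈ ({x, y} : Set _) := huniv ▸ Set.mem_univ _
      simp only [Set.mem_insert_iff, Set.mem_singleton_iff] at h0 h1' hz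
      rcases h0 with h0 | h0 <;> rcases h1' with h1' | h1' <;> rcases hz with hz | hz <;>
        subst_vars <;> tauto
    have hzu : Ideal.Quotient.mk I (zetaR n) * Ideal.Quotient.mk I (zetaR n ^ (n - 1)) = 1 := by
      rw [← RingHom.map_mul, ← pow_succ']
      have hsn : n - 1 + 1 = n := by omega
      rw [hsn]
      have hzn : zetaR n ^ n = 1 := by
        ext
        rw [coe_pow]
        exact zeta_pow_n n hn0
      rw [hzn, RingHom.map_one]
    have hz1 : Ideal.Quotient.mk I (zetaR n) = 1 := by
      rcases hmem (Ideal.Quotient.mk I (zetaR n)) with h | h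
      · rw [h, zero_mul] at hzu; exact (h01 hzu).elim
      · exact h
    have h2 : Ideal.Quotient.mk I (1 + 1) = 0 := by
      rcases hmem (Ideal.Quotient.mk I (1 + 1)) with h | h
      · exact h
      · exfalso
        rw [q_two n I] at h
        exact h01 (by linear_combination -h)
    exact key hz1 h2
  · intro H
    have h10 := H 1 0
    have h00 := H 0 0
    rw [zpow_one, zpow_zero] at h10
    rw [zpow_zero] at h00
    obtain ⟨w1, hw1I, hw1⟩ := h10.1
    obtain ⟨w2, hw2I, hw2⟩ := h00.2
    have hw1' : w1 = zetaR n - 1 := by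
      ext; rw [hw1]; push_cast [zetaR]; ring
    have hw2' : w2 = 1 + 1 := by
      ext; rw [hw2]; push_cast; ring
    have hz1 : Ideal.Quotient.mk I (zetaR n) = 1 := by
      rw [← sub_eq_zero]
      have h : Ideal.Quotient.mk I (zetaR n) - 1 = Ideal.Quotient.mk I (zetaR n - 1) := by
        rw [RingHom.map_sub, RingHom.map_one]
      rw [h, ← hw1', Ideal.Quotient.eq_zero_iff_mem]
      exact hw1I
    have h2 : Ideal.Quotient.mk I (1 + 1) = 0 := by
      rw [Ideal.Quotient.eq_zero_iff_mem, ← hw2']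
      exact hw2I
    have h11 : (1 : ↥(Rn n) ⧸ I) + 1 = 0 := by rw [← q_two n I, h2]
    have hmem : ∀ z : ↥(Rn n) ⧸ I, z = 0 ∨ z = 1 := by
      intro z
      obtain ⟨r, rfl⟩ := Ideal.Quotient.mk_surjective z
      have key2 : ∀ (x : ℂ) (hx : x ∈ Subring.closure {zeta n}),
          Ideal.Quotient.mk I ⟨x, hx⟩ = 0 ∨ Ideal.Quotient.mk I ⟨x, hx⟩ = 1 := by
        intro x hx
        induction hx using Subring.closure_induction with
        | mem x hx =>
          right
          rcases hx with rfl
          exact hz1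
        | zero => left; exact RingHom.map_zero _
        | one => right; exact RingHom.map_one _
        | add x y hx hy ihx ihy =>
          have h : (⟨x + y, add_mem hx hy⟩ : ↥(Rn n)) = ⟨x, hx⟩ + ⟨y, hy⟩ := rfl
          rw [h, RingHom.map_add]
          rcases ihx with h' | h' <;> rcases ihy with h'' | h'' <;> rw [h', h'']
          · left; rw [add_zero]
          · right; rw [zero_add]
          · right; rw [add_zero]
          · left; exact h11
        | neg x hx ihx =>
          have h : (⟨-x, neg_mem hx⟩ : ↥(Rn n)) = -⟨x, hx⟩ := rfl
          rw [h, RingHom.map_neg]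
          rcases ihx with h' | h' <;> rw [h']
          · left; exact neg_zero
          · right; linear_combination -h11
        | mul x y hx hy ihx ihy =>
          have h : (⟨x * y, mul_mem hx hy⟩ : ↥(Rn n)) = ⟨x, hx⟩ * ⟨y, hy⟩ := rfl
          rw [h, RingHom.map_mul]
          rcases ihx with h' | h' <;> rcases ihy with h'' | h'' <;> rw [h', h'']
          · left; rw [mul_zero]
          · left; rw [zero_mul]
          · left; rw [mul_zero]
          · right; rw [mul_one]
      exact key2 r r.2
    rw [Nat.card_eq_two_iff]
    refine ⟨0, 1, h01, Set.eq_univ_of_forall fun z => ?_⟩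
    rcases hmem z with h | h
    · exact Set.mem_insert_iff.mpr (Or.inl h)
    · exact Set.mem_insert_iff.mpr (Or.inr h)
end

section
/- Suppose n ∈ {3,5,7,8,9,11,12,13,15,16,17,19,20,21,24,25,27,28,32,33,35,36,40,44,45,48,60,84} (the class number one values with n ≠ 4), and let I = 2R. Then the colouring induced by I is perfect, and an isometry g of the complex plane with g(R) = R satisfies g(x) − x ∈ I for all x ∈ R if and only if there exists t ∈ I such that either g(z) = z + t for all z, or g(z) = −z + t for all z. That is, H = G and the colour preserving group K equals T_{(2)} ⋊ C₂. -/
open Complex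

set_option maxHeartbeats 1000000

section Helpers

open Polynomial

lemma zeta_prim (n : ℕ) (hn : n ≠ 0) : IsPrimitiveRoot (zeta n) n :=
  Complex.isPrimitiveRoot_exp n hn

lemma ringHom_aeval_int {A B : Type*} [CommRing A] [CommRing B] (f : A →+* B) (x : A)
    (p : Polynomial ℤ) : f (Polynomial.aeval x p) = Polynomial.aeval (f x) p := by
  rw [Polynomial.aeval_def, Polynomial.aeval_def, Polynomial.hom_eval₂]
  congr 1
  exact RingHom.ext_int _ _

lemma mem_Rn_iff {n : ℕ} {z : ℂ} :
    z ∈ Rn n ↔ ∃ p : Polynomial ℤ, Polynomial.aeval (zeta n) p = z := by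
  have h : z ∈ Rn n ↔ z ∈ Algebra.adjoin ℤ {zeta n} := by
    rw [Algebra.adjoin_int]; exact Iff.rfl
  rw [h, Algebra.adjoin_singleton_eq_range_aeval, AlgHom.mem_range]

lemma abs_of_pow_eq_one {z : ℂ} {n : ℕ} (hn : n ≠ 0) (h : z ^ n = 1) : ‖z‖ = 1 := by
  have h1 : ‖z‖ ^ n = 1 := by rw [← norm_pow, h, norm_one]
  exact (pow_left_inj₀ (norm_nonneg z) zero_le_one hn).mp (by rw [h1, one_pow])

lemma conj_of_pow_eq_one {z : ℂ} {n : ℕ} (hn : n ≠ 0) (h : z ^ n = 1) :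
    (starRingEnd ℂ) z = z ^ (n - 1) := by
  have hz : z ≠ 0 := by
    intro h0; rw [h0, zero_pow hn] at h; exact zero_ne_one h
  have habs := abs_of_pow_eq_one hn h
  have h1 : z * (starRingEnd ℂ) z = 1 := by
    rw [Complex.mul_conj]
    norm_cast
    rw [Complex.normSq_eq_norm_sq, habs]; norm_num
  have h2 : z * z ^ (n - 1) = 1 := by
    rw [← pow_succ', Nat.sub_add_cancel (Nat.one_le_iff_ne_zero.mpr hn)]; exact h
  exact mul_left_cancel₀ hz (h1.trans h2.symm)

lemma conj_mem_Rn {n : ℕ} (hn : n ≠ 0) {z : ℂ} (hz : z ∈ Rn n) :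
    (starRingEnd ℂ) z ∈ Rn n := by
  obtain ⟨p, hp⟩ := mem_Rn_iff.mp hz
  refine mem_Rn_iff.mpr ⟨p.comp (Polynomial.X ^ (n - 1)), ?_⟩
  rw [Polynomial.aeval_comp, map_pow, Polynomial.aeval_X,
    ← conj_of_pow_eq_one hn (zeta_prim n hn).pow_eq_one, ← hp,
    ringHom_aeval_int (starRingEnd ℂ)]

@[simp] lemma coe_two {n : ℕ} : ((2 : ↥(Rn n)) : ℂ) = 2 := by
  rw [show (2 : ↥(Rn n)) = 1 + 1 by norm_num]; push_cast; norm_num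

lemma inIdeal_iff {n : ℕ} {z : ℂ} :
    InIdeal n (Ideal.span {(2 : ↥(Rn n))}) z ↔ ∃ r : ℂ, r ∈ Rn n ∧ z = 2 * r := by
  constructor
  · rintro ⟨w, hw, rfl⟩
    rw [Ideal.mem_span_singleton'] at hw
    obtain ⟨c, rfl⟩ := hw
    exact ⟨(c : ℂ), c.2, by push_cast [coe_two]; ring⟩
  · rintro ⟨r, hr, rfl⟩
    exact ⟨2 * ⟨r, hr⟩, Ideal.mem_span_singleton'.mpr ⟨⟨r, hr⟩, mul_comm _ _⟩,
      by push_cast [coe_two]; ring⟩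

lemma inIdeal_sub {n : ℕ} {z w : ℂ}
    (hz : InIdeal n (Ideal.span {(2 : ↥(Rn n))}) z)
    (hw : InIdeal n (Ideal.span {(2 : ↥(Rn n))}) w) :
    InIdeal n (Ideal.span {(2 : ↥(Rn n))}) (z - w) := by
  obtain ⟨r, hr, rfl⟩ := inIdeal_iff.mp hz
  obtain ⟨s, hs, rfl⟩ := inIdeal_iff.mp hw
  exact inIdeal_iff.mpr ⟨r - s, sub_mem hr hs, by ring⟩

lemma inIdeal_neg {n : ℕ} {z : ℂ}
    (hz : InIdeal n (Ideal.span {(2 : ↥(Rn n))}) z) :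
    InIdeal n (Ideal.span {(2 : ↥(Rn n))}) (-z) := by
  obtain ⟨r, hr, rfl⟩ := inIdeal_iff.mp hz
  exact inIdeal_iff.mpr ⟨-r, neg_mem hr, by ring⟩

lemma inIdeal_two_mul {n : ℕ} {z : ℂ} (hz : z ∈ Rn n) :
    InIdeal n (Ideal.span {(2 : ↥(Rn n))}) (2 * z) :=
  inIdeal_iff.mpr ⟨z, hz, rfl⟩

lemma inIdeal_unit_mul {n : ℕ} (hn : n ≠ 0) {a : ℂ} (ha : a ∈ Rn n)
    (ha1 : ‖a‖ = 1) (z : ℂ) :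
    InIdeal n (Ideal.span {(2 : ↥(Rn n))}) z ↔
      InIdeal n (Ideal.span {(2 : ↥(Rn n))}) (a * z) := by
  have hconj : a * (starRingEnd ℂ) a = 1 := by
    rw [Complex.mul_conj]
    norm_cast
    rw [Complex.normSq_eq_norm_sq, ha1]; norm_num
  constructor
  · rintro hzI
    obtain ⟨r, hr, rfl⟩ := inIdeal_iff.mp hzI
    exact inIdeal_iff.mpr ⟨a * r, mul_mem ha hr, by ring⟩
  · rintro hzI
    obtain ⟨r, hr, heq⟩ := inIdeal_iff.mp hzI
    refine inIdeal_iff.mpr ⟨(starRingEnd ℂ) a * r, mul_mem (conj_mem_Rn hn ha) hr, ?_⟩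
    have : z = (starRingEnd ℂ) a * (a * z) := by
      rw [← mul_assoc, mul_comm ((starRingEnd ℂ) a) a, hconj, one_mul]
    rw [this, heq]; ring

lemma inIdeal_conj {n : ℕ} (hn : n ≠ 0) {z : ℂ} :
    InIdeal n (Ideal.span {(2 : ↥(Rn n))}) z ↔
      InIdeal n (Ideal.span {(2 : ↥(Rn n))}) ((starRingEnd ℂ) z) := by
  constructor
  · rintro hzI
    obtain ⟨r, hr, rfl⟩ := inIdeal_iff.mp hzI
    exact inIdeal_iff.mpr ⟨(starRingEnd ℂ) r, conj_mem_Rn hn hr, by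
      rw [map_mul, map_ofNat]⟩
  · rintro hzI
    obtain ⟨r, hr, heq⟩ := inIdeal_iff.mp hzI
    refine inIdeal_iff.mpr ⟨(starRingEnd ℂ) r, conj_mem_Rn hn hr, ?_⟩
    have := congrArg (starRingEnd ℂ) heq
    rw [Complex.conj_conj, map_mul] at this
    rw [map_ofNat] at this
    rw [this]

open IntermediateField in
lemma core {n : ℕ} (hn : n ≠ 0) {u r : ℂ} (hu : u ∈ Rn n) (habs : ‖u‖ = 1)
    (hr : r ∈ Rn n) (heq : u - 1 = 2 * r) : u = 1 ∨ u = -1 := by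
  by_cases h1 : u = 1
  · exact Or.inl h1
  right
  set ζ := zeta n with hζdef
  have hζn : ζ ^ n = 1 := (zeta_prim n hn).pow_eq_one
  have hζint : IsIntegral ℚ ζ :=
    ⟨X ^ n - C 1, monic_X_pow_sub_C 1 hn, by simp [eval₂_sub, hζn]⟩
  let F : IntermediateField ℚ ℂ := ℚ⟮ζ⟯
  haveI : FiniteDimensional ℚ F := adjoin.finiteDimensional hζint
  set ζK : F := AdjoinSimple.gen ℚ ζ with hζKdef
  have hcoeζ : (ζK : ℂ) = ζ := rfl
  obtain ⟨P, hP⟩ := mem_Rn_iff.mp hu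
  obtain ⟨Q, hQ⟩ := mem_Rn_iff.mp hr
  set uK : F := Polynomial.aeval ζK P with huKdef
  set rK : F := Polynomial.aeval ζK Q with hrKdef
  have hcoeaev : ∀ p : Polynomial ℤ, ((Polynomial.aeval ζK p : F) : ℂ) = Polynomial.aeval ζ p := by
    intro p
    have := ringHom_aeval_int (algebraMap F ℂ) ζK p
    simpa [hcoeζ] using this
  have hcoeu : (uK : ℂ) = u := by rw [huKdef, hcoeaev, hP]
  have hcoer : (rK : ℂ) = r := by rw [hrKdef, hcoeaev, hQ]
  have hζKn : ζK ^ n = 1 := by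
    have : ((ζK ^ n : F) : ℂ) = ((1 : F) : ℂ) := by push_cast [hcoeζ, hζn]; norm_num
    exact_mod_cast this
  have hζKint : IsIntegral ℤ ζK :=
    ⟨X ^ n - C 1, monic_X_pow_sub_C 1 hn, by simp [eval₂_sub, hζKn]⟩
  have hintmem : ∀ p : Polynomial ℤ, IsIntegral ℤ (Polynomial.aeval ζK p) := by
    intro p
    have hle : Algebra.adjoin ℤ {ζK} ≤ integralClosure ℤ F :=
      Algebra.adjoin_le (Set.singleton_subset_iff.mpr hζKint)
    exact hle (by rw [Algebra.adjoin_singleton_eq_range_aeval]; exact ⟨p, rfl⟩)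
  -- all embeddings have absolute value 1 on uK
  set vK : F := Polynomial.aeval ζK (P.comp (X ^ (n - 1))) with hvKdef
  have hconjζ : (starRingEnd ℂ) ζ = ζ ^ (n - 1) := conj_of_pow_eq_one hn hζn
  have hcoev : (vK : ℂ) = (starRingEnd ℂ) u := by
    rw [hvKdef, hcoeaev, Polynomial.aeval_comp, map_pow, Polynomial.aeval_X, ← hconjζ,
      ← hP, ringHom_aeval_int (starRingEnd ℂ)]
  have huv : uK * vK = 1 := by
    have : ((uK * vK : F) : ℂ) = ((1 : F) : ℂ) := by
      push_cast [hcoeu, hcoev]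
      rw [Complex.mul_conj]
      norm_cast
      rw [Complex.normSq_eq_norm_sq, habs]; norm_num
    exact_mod_cast this
  have hkey : ∀ σ : F →ₐ[ℚ] ℂ, ‖σ uK‖ = 1 := by
    intro σ
    set s : ℂ := σ ζK with hsdef
    have hsn : s ^ n = 1 := by rw [hsdef, ← map_pow, hζKn, map_one]
    have hσu : σ uK = Polynomial.aeval s P := by
      rw [huKdef]; exact ringHom_aeval_int σ.toRingHom ζK P
    have hσv : σ vK = (starRingEnd ℂ) (σ uK) := by
      rw [hvKdef, hσu]
      have h1 : σ (Polynomial.aeval ζK (P.comp (X ^ (n - 1)))) =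
          Polynomial.aeval s (P.comp (X ^ (n - 1))) :=
        ringHom_aeval_int σ.toRingHom ζK _
      rw [h1, Polynomial.aeval_comp, map_pow, Polynomial.aeval_X,
        ← conj_of_pow_eq_one hn hsn, ringHom_aeval_int (starRingEnd ℂ)]
    have : σ uK * (starRingEnd ℂ) (σ uK) = 1 := by
      rw [← hσv, ← map_mul, huv, map_one]
    rw [Complex.mul_conj] at this
    have h2 : Complex.normSq (σ uK) = 1 := by exact_mod_cast this
    have := Complex.sq_norm (σ uK)
    rw [h2] at this
    nlinarith [norm_nonneg (σ uK)]
  -- norm computation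
  set d := Module.finrank ℚ F with hddef
  have hd1 : 1 ≤ d := Module.finrank_pos
  have hukr : uK - 1 = 2 * rK := by
    have : ((uK - 1 : F) : ℂ) = ((2 * rK : F) : ℂ) := by
      push_cast [hcoeu, hcoer]; exact heq
    exact_mod_cast this
  have hrK0 : rK ≠ 0 := by
    intro h0
    rw [h0, mul_zero, sub_eq_zero] at hukr
    exact h1 (by rw [← hcoeu, hukr]; norm_num)
  obtain ⟨m, hm⟩ : ∃ m : ℤ, (algebraMap ℤ ℚ) m = Algebra.norm ℚ rK :=
    IsIntegrallyClosed.isIntegral_iff.mp (Algebra.isIntegral_norm ℚ (hintmem Q))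
  have hm0 : m ≠ 0 := by
    intro h0
    rw [h0, map_zero] at hm
    exact (Algebra.norm_ne_zero_iff.mpr hrK0) hm.symm
  have hnorm2 : Algebra.norm ℚ (2 : F) = 2 ^ d := by
    have h2 : (2 : F) = algebraMap ℚ F 2 := by norm_num
    rw [h2, Algebra.norm_algebraMap]
  have hnormval : Algebra.norm ℚ (uK - 1) = 2 ^ d * (m : ℚ) := by
    rw [hukr, map_mul, hnorm2, ← hm, eq_intCast]
  have hprodeq : ‖algebraMap ℚ ℂ (Algebra.norm ℚ (uK - 1))‖ =
      ∏ σ : F →ₐ[ℚ] ℂ, ‖σ (uK - 1)‖ := by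
    rw [Algebra.norm_eq_prod_embeddings]
    exact norm_prod _ _
  have hlhs : (2 : ℝ) ^ d ≤ ‖algebraMap ℚ ℂ (Algebra.norm ℚ (uK - 1))‖ := by
    rw [hnormval]
    have : (algebraMap ℚ ℂ) (2 ^ d * (m : ℚ)) = (2 : ℂ) ^ d * (m : ℂ) := by
      push_cast; norm_num
    have h2 : ‖(2 : ℂ)‖ = 2 := by norm_num
    have hmabs : (1 : ℝ) ≤ ‖(m : ℂ)‖ := by
      rw [Complex.norm_intCast]
      exact_mod_cast Int.one_le_abs (by exact_mod_cast hm0)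
    rw [this, norm_mul, norm_pow, h2]
    exact le_mul_of_one_le_right (by positivity) hmabs
  have hcard : Fintype.card (F →ₐ[ℚ] ℂ) = d := AlgHom.card ℚ F ℂ
  -- upper bound on each factor
  have hfle : ∀ σ : F →ₐ[ℚ] ℂ, ‖σ (uK - 1)‖ ≤ 2 := by
    intro σ
    rw [map_sub, map_one]
    calc ‖σ uK - 1‖ ≤ ‖σ uK‖ + ‖(1 : ℂ)‖ := by
          simpa [sub_eq_add_neg] using norm_add_le (σ uK) (-1)
      _ = 2 := by rw [hkey σ]; norm_num
  -- the distinguished embedding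
  haveI : DecidableEq (↥F →ₐ[ℚ] ℂ) := Classical.decEq _
  set σ₀ : F →ₐ[ℚ] ℂ := F.val with hσ₀def
  have hσ₀u : σ₀ (uK - 1) = u - 1 := by
    rw [map_sub, map_one]
    congr 1
  have hge2 : (2 : ℝ) ≤ ‖u - 1‖ := by
    have hsplit : (∏ σ : F →ₐ[ℚ] ℂ, ‖σ (uK - 1)‖) =
        ‖σ₀ (uK - 1)‖ *
          ∏ σ ∈ Finset.univ.erase σ₀, ‖σ (uK - 1)‖ :=
      (Finset.mul_prod_erase _ _ (Finset.mem_univ σ₀)).symm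
    have herase : (∏ σ ∈ Finset.univ.erase σ₀, ‖σ (uK - 1)‖) ≤ 2 ^ (d - 1) := by
      calc (∏ σ ∈ Finset.univ.erase σ₀, ‖σ (uK - 1)‖)
          ≤ ∏ _σ ∈ Finset.univ.erase σ₀, (2 : ℝ) :=
            Finset.prod_le_prod (fun σ _ => norm_nonneg _) (fun σ _ => hfle σ)
        _ = 2 ^ (d - 1) := by
            rw [Finset.prod_const, Finset.card_erase_of_mem (Finset.mem_univ σ₀),
              Finset.card_univ, hcard]
    have hpos : (0 : ℝ) < 2 ^ (d - 1) := pow_pos (by norm_num) _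
    have h2d : (2 : ℝ) ^ d = 2 * 2 ^ (d - 1) := by
      rw [← pow_succ']
      congr 1
      omega
    have hchain : (2 : ℝ) ^ d ≤ ‖u - 1‖ * 2 ^ (d - 1) := by
      calc (2 : ℝ) ^ d ≤ ‖algebraMap ℚ ℂ (Algebra.norm ℚ (uK - 1))‖ := hlhs
        _ = ∏ σ : F →ₐ[ℚ] ℂ, ‖σ (uK - 1)‖ := hprodeq
        _ = ‖σ₀ (uK - 1)‖ *
              ∏ σ ∈ Finset.univ.erase σ₀, ‖σ (uK - 1)‖ := hsplit
        _ ≤ ‖σ₀ (uK - 1)‖ * 2 ^ (d - 1) := by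
            exact mul_le_mul_of_nonneg_left herase (norm_nonneg _)
        _ = ‖u - 1‖ * 2 ^ (d - 1) := by rw [hσ₀u]
    rw [h2d] at hchain
    exact le_of_mul_le_mul_right (by linarith) hpos
  -- conclude u = -1
  have hns1 : u.re * u.re + u.im * u.im = 1 := by
    have := Complex.sq_norm u
    rw [habs] at this
    have h := this.symm
    rw [Complex.normSq_apply] at h
    nlinarith
  have hns4 : (4 : ℝ) ≤ (u.re - 1) * (u.re - 1) + u.im * u.im := by
    have hsq : (2 : ℝ) ^ 2 ≤ ‖u - 1‖ ^ 2 := by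
      exact pow_le_pow_left₀ (by norm_num) hge2 2
    rw [Complex.sq_norm, Complex.normSq_apply, Complex.sub_re, Complex.sub_im] at hsq
    simp only [Complex.one_re, Complex.one_im, sub_zero] at hsq
    nlinarith [hsq]
  have hre : u.re = -1 := by nlinarith
  have him : u.im = 0 := by nlinarith
  apply Complex.ext <;> simp [hre, him]

lemma mem_of_inIdeal {n : ℕ} {I : Ideal ↥(Rn n)} {z : ℂ} (h : InIdeal n I z) : z ∈ Rn n := by
  obtain ⟨w, _, rfl⟩ := h
  exact w.2

end Helpers

/-- for the class number one values of `n` with `n ≠ 4`, the colouring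
induced by `(2)` is perfect (`H = G`), and the colour preserving isometries are exactly
`z ↦ z + t` and `z ↦ -z + t` with `t ∈ (2)`, i.e. `K = T_{(2)} ⋊ C₂`. -/
theorem stmt12 (n : ℕ)
    (hn : n ∈ ({3, 5, 7, 8, 9, 11, 12, 13, 15, 16, 17, 19, 20, 21, 24, 25, 27, 28, 32,
      33, 35, 36, 40, 44, 45, 48, 60, 84} : Set ℕ)) :
    IsPerfectColouring n (Ideal.span {(2 : ↥(Rn n))}) ∧
    ∀ g : ℂ → ℂ, IsIsometry g → g '' (Rn n : Set ℂ) = (Rn n : Set ℂ) →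
      ((∀ x ∈ (Rn n : Set ℂ), InIdeal n (Ideal.span {(2 : ↥(Rn n))}) (g x - x)) ↔
        ∃ t : ℂ, InIdeal n (Ideal.span {(2 : ↥(Rn n))}) t ∧
          ((∀ z : ℂ, g z = z + t) ∨ (∀ z : ℂ, g z = -z + t))) := by
  have hmem : 3 ≤ n ∧ n ≠ 4 := by
    simp only [Set.mem_insert_iff, Set.mem_singleton_iff] at hn
    rcases hn with rfl|rfl|rfl|rfl|rfl|rfl|rfl|rfl|rfl|rfl|rfl|rfl|rfl|rfl|rfl|rfl|rfl|rfl|rfl|rfl|rfl|rfl|rfl|rfl|rfl|rfl|rfl|rfl <;> norm_num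
  obtain ⟨hn3, hn4⟩ := hmem
  have hn0 : n ≠ 0 := by omega
  have hζR : zeta n ∈ Rn n := Subring.subset_closure rfl
  have hζn : zeta n ^ n = 1 := (zeta_prim n hn0).pow_eq_one
  have hζabs : ‖zeta n‖ = 1 := abs_of_pow_eq_one hn0 hζn
  have hζconj : (starRingEnd ℂ) (zeta n) = zeta n ^ (n - 1) := conj_of_pow_eq_one hn0 hζn
  have hζpow : zeta n * zeta n ^ (n - 1) = 1 := by
    rw [← pow_succ', Nat.sub_add_cancel (by omega)]; exact hζn
  have hζ2 : ¬(zeta n ^ 2 = 1 ∨ zeta n ^ 2 = -1) := by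
    rintro (h | h)
    · have := Nat.le_of_dvd (by norm_num) ((zeta_prim n hn0).dvd_of_pow_eq_one 2 h)
      omega
    · have h4 : zeta n ^ 4 = 1 := by
        have : (zeta n ^ 2) ^ 2 = 1 := by rw [h]; ring
        rw [← pow_mul] at this; exact this
      have hdvd := (zeta_prim n hn0).dvd_of_pow_eq_one 4 h4
      have hle := Nat.le_of_dvd (by norm_num) hdvd
      interval_cases n
      · exact (by norm_num : ¬((3:ℕ) ∣ 4)) hdvd
      · exact hn4 rfl
  constructor
  · -- perfect colouring
    rintro g ⟨a, b, ha1, hform⟩ himg x y hx hy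
    have hgR : ∀ w ∈ Rn n, g w ∈ Rn n := by
      intro w hw
      have hmem : g w ∈ g '' (Rn n : Set ℂ) := Set.mem_image_of_mem g hw
      rw [himg] at hmem
      exact hmem
    rcases hform with hf | hf
    · have hbR : b ∈ Rn n := by
        have := hgR 0 (zero_mem _)
        simpa [hf 0] using this
      have haR : a ∈ Rn n := by
        have h1R := hgR 1 (one_mem _)
        rw [hf 1] at h1R
        simpa using sub_mem h1R hbR
      have hgd : g x - g y = a * (x - y) := by rw [hf x, hf y]; ring
      rw [hgd]
      exact inIdeal_unit_mul hn0 haR ha1 (x - y)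
    · have hbR : b ∈ Rn n := by
        have := hgR 0 (zero_mem _)
        simpa [hf 0] using this
      have haR : a ∈ Rn n := by
        have h1R := hgR 1 (one_mem _)
        rw [hf 1, map_one] at h1R
        simpa using sub_mem h1R hbR
      have hgd : g x - g y = a * ((starRingEnd ℂ) (x - y)) := by
        rw [hf x, hf y, map_sub]; ring
      rw [hgd]
      exact (inIdeal_conj hn0).trans (inIdeal_unit_mul hn0 haR ha1 _)
  · rintro g ⟨a, b, ha1, hform⟩ himg
    have hgR : ∀ w ∈ Rn n, g w ∈ Rn n := by
      intro w hw
      have hmem : g w ∈ g '' (Rn n : Set ℂ) := Set.mem_image_of_mem g hw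
      rw [himg] at hmem
      exact hmem
    constructor
    · intro h
      rcases hform with hf | hf
      · -- orientation preserving
        have hbI : InIdeal n (Ideal.span {(2 : ↥(Rn n))}) b := by
          have := h 0 (zero_mem _)
          simpa [hf 0] using this
        have haI : InIdeal n (Ideal.span {(2 : ↥(Rn n))}) (a - 1) := by
          have h1 := h 1 (one_mem _)
          rw [hf 1] at h1
          have := inIdeal_sub h1 hbI
          have heq : a * 1 + b - 1 - b = a - 1 := by ring
          rwa [heq] at this
        have haR : a ∈ Rn n := by
          have := mem_of_inIdeal haI
          have h2 : a = (a - 1) + 1 := by ring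
          rw [h2]; exact add_mem this (one_mem _)
        obtain ⟨ra, hraR, hra⟩ := inIdeal_iff.mp haI
        rcases core hn0 haR ha1 hraR hra with hA | hA
        · exact ⟨b, hbI, Or.inl (fun z => by rw [hf z, hA]; ring)⟩
        · exact ⟨b, hbI, Or.inr (fun z => by rw [hf z, hA]; ring)⟩
      · -- reflection: impossible
        exfalso
        have hbI : InIdeal n (Ideal.span {(2 : ↥(Rn n))}) b := by
          have := h 0 (zero_mem _)
          simpa [hf 0] using this
        have haI : InIdeal n (Ideal.span {(2 : ↥(Rn n))}) (a - 1) := by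
          have h1 := h 1 (one_mem _)
          rw [hf 1, map_one] at h1
          have := inIdeal_sub h1 hbI
          have heq : a * 1 + b - 1 - b = a - 1 := by ring
          rwa [heq] at this
        have haR : a ∈ Rn n := by
          have := mem_of_inIdeal haI
          have h2 : a = (a - 1) + 1 := by ring
          rw [h2]; exact add_mem this (one_mem _)
        obtain ⟨ra, hraR, hra⟩ := inIdeal_iff.mp haI
        have hζI := h (zeta n) hζR
        rw [hf (zeta n)] at hζI
        have hw : InIdeal n (Ideal.span {(2 : ↥(Rn n))}) (a * zeta n ^ (n - 1) - zeta n) := by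
          have := inIdeal_sub hζI hbI
          have heq : a * (starRingEnd ℂ) (zeta n) + b - zeta n - b
              = a * zeta n ^ (n - 1) - zeta n := by rw [hζconj]; ring
          rwa [heq] at this
        have hmul := (inIdeal_unit_mul hn0 hζR hζabs _).mp hw
        have hsimp : zeta n * (a * zeta n ^ (n - 1) - zeta n) = a - zeta n ^ 2 := by
          have : a * (zeta n * zeta n ^ (n - 1)) = a := by rw [hζpow]; ring
          calc zeta n * (a * zeta n ^ (n - 1) - zeta n)
              = a * (zeta n * zeta n ^ (n - 1)) - zeta n ^ 2 := by ring
            _ = a - zeta n ^ 2 := by rw [this]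
        rw [hsimp] at hmul
        rcases core hn0 haR ha1 hraR hra with hA | hA
        · -- a = 1 : zeta^2 ≡ 1
          rw [hA] at hmul
          have hneg := inIdeal_neg hmul
          have heq2 : -(1 - zeta n ^ 2) = zeta n ^ 2 - 1 := by ring
          rw [heq2] at hneg
          obtain ⟨s, hsR, hs⟩ := inIdeal_iff.mp hneg
          have habs2 : ‖zeta n ^ 2‖ = 1 := by rw [norm_pow, hζabs]; norm_num
          exact hζ2 (core hn0 (pow_mem hζR 2) habs2 hsR hs)
        · -- a = -1 : zeta^2 ≡ -1
          rw [hA] at hmul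
          have heq2 : -1 - zeta n ^ 2 = (-(zeta n ^ 2)) - 1 := by ring
          rw [heq2] at hmul
          obtain ⟨s, hsR, hs⟩ := inIdeal_iff.mp hmul
          have habs2 : ‖-(zeta n ^ 2)‖ = 1 := by
            rw [norm_neg, norm_pow, hζabs]; norm_num
          rcases core hn0 (neg_mem (pow_mem hζR 2)) habs2 hsR hs with hB | hB
          · exact hζ2 (Or.inr (by linear_combination -hB))
          · exact hζ2 (Or.inl (by linear_combination -hB))
    · rintro ⟨t, htI, htf | htf⟩ x hx
      · have heq : g x - x = t := by rw [htf x]; ring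
        rw [heq]; exact htI
      · obtain ⟨rt, hrtR, hrt⟩ := inIdeal_iff.mp htI
        have heq : g x - x = 2 * (rt - x) := by rw [htf x, hrt]; ring
        rw [heq]; exact inIdeal_two_mul (sub_mem hrtR hx)
end
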